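/- Let V be a vector space of dimension n ≥ 2 over a field and 2 ≤ m ≤ n. Every permutation of an m-simplex in P(V) extends to an element of PGL(V). -/

import Mathlib

/-- A finite set of lines is *independent* if some choice of nonzero representative
vectors is linearly independent. -/
def IndepLines (K : Type*) {V : Type*} [DivisionRing K] [AddCommGroup V] [Module K V]
    (𝒳 : Set (Submodule K V)) : Prop :=
  ∃ x : 𝒳 → V, (∀ P : 𝒳, x P ∈ (P : Submodule K V) ∧ x P ≠ 0) ∧ LinearIndependent K x

/-- An `(m+1)`-element subset of `P(V)` is an *`m`-simplex* if it is not independent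
but every `m`-element subset of it is independent. -/
def IsSimplex (K : Type*) {V : Type*} [DivisionRing K] [AddCommGroup V] [Module K V]
    (m : ℕ) (𝒳 : Set (Submodule K V)) : Prop :=
  𝒳.Finite ∧ 𝒳.ncard = m + 1 ∧ (∀ P ∈ 𝒳, Module.finrank K P = 1) ∧
    ¬ IndepLines K 𝒳 ∧ ∀ 𝒴 ⊆ 𝒳, 𝒴.ncard = m → IndepLines K 𝒴

/-- A line (finrank-1 submodule) is the span of any of its nonzero elements. -/
lemma line_eq_span {K V : Type*} [Field K] [AddCommGroup V] [Module K V]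
    [FiniteDimensional K V] {P : Submodule K V} (hP : Module.finrank K P = 1)
    {v : V} (hv : v ∈ P) (h0 : v ≠ 0) : P = Submodule.span K {v} := by
  refine (Submodule.eq_of_le_of_finrank_eq ?_ ?_).symm
  · rwa [Submodule.span_singleton_le_iff_mem]
  · rw [finrank_span_singleton h0, hP]

/-- Any choice of nonzero representatives of an independent family of lines is
linearly independent. -/
lemma indep_reps {K V : Type*} [Field K] [AddCommGroup V] [Module K V]
    [FiniteDimensional K V] {𝒳 : Set (Submodule K V)}
    (hrank : ∀ P ∈ 𝒳, Module.finrank K P = 1) (hind : IndepLines K 𝒳)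
    (w : 𝒳 → V) (hw : ∀ P : 𝒳, w P ∈ (P : Submodule K V) ∧ w P ≠ 0) :
    LinearIndependent K w := by
  obtain ⟨y, hy, hyli⟩ := hind
  have key : ∀ P : 𝒳, ∃ c : Kˣ, w P = (c : K) • y P := by
    intro P
    have hspan : (P : Submodule K V) = Submodule.span K {y P} :=
      line_eq_span (hrank P P.2) (hy P).1 (hy P).2
    have hmem : w P ∈ Submodule.span K {y P} := hspan ▸ (hw P).1
    obtain ⟨c, hc⟩ := Submodule.mem_span_singleton.1 hmem
    have hc0 : c ≠ 0 := by
      rintro rfl; exact (hw P).2 (by rw [← hc, zero_smul])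
    exact ⟨Units.mk0 c hc0, hc.symm⟩
  choose c hc using key
  have : w = fun P => (c P : K) • y P := funext hc
  rw [this]
  exact hyli.units_smul c

/-- Key auxiliary lemma: given a simplex and nonzero representatives `w`, the family
obtained by dropping any one line is linearly independent. -/
lemma simplex_drop_indep {K V : Type*} [Field K] [AddCommGroup V] [Module K V]
    [FiniteDimensional K V] {m : ℕ} {𝒳 : Set (Submodule K V)}
    (hfin : 𝒳.Finite) (hcard : 𝒳.ncard = m + 1)
    (hrank : ∀ P ∈ 𝒳, Module.finrank K P = 1)
    (hsub : ∀ 𝒴 ⊆ 𝒳, 𝒴.ncard = m → IndepLines K 𝒴)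
    (w : 𝒳 → V) (hw : ∀ P : 𝒳, w P ∈ (P : Submodule K V) ∧ w P ≠ 0) (P0 : 𝒳) :
    LinearIndependent K (fun P : {P : 𝒳 // P ≠ P0} => w P.1) := by
  set 𝒴 : Set (Submodule K V) := 𝒳 \ {(P0 : Submodule K V)} with h𝒴
  have h𝒴sub : 𝒴 ⊆ 𝒳 := Set.diff_subset
  have h𝒴card : 𝒴.ncard = m := by
    rw [h𝒴, Set.ncard_diff_singleton_of_mem P0.2, hcard]
    omega
  have hind : IndepLines K 𝒴 := hsub 𝒴 h𝒴sub h𝒴card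
  -- the restriction of w to 𝒴 is a choice of nonzero representatives for 𝒴
  have h1 : LinearIndependent K (fun Q : 𝒴 => w ⟨Q.1, Q.2.1⟩) := by
    refine indep_reps (fun P hP => hrank P (h𝒴sub hP)) hind _ (fun Q => hw ⟨Q.1, Q.2.1⟩)
  -- compose with the obvious injection
  let e : {P : 𝒳 // P ≠ P0} → 𝒴 :=
    fun P => ⟨P.1.1, ⟨P.1.2, fun h => P.2 (Subtype.ext (by simpa using h))⟩⟩
  have he : Function.Injective e := by
    intro a b hab
    have h' : ((e a : Set.Elem 𝒴) : Submodule K V) = ((e b : Set.Elem 𝒴) : Submodule K V) :=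
      congrArg Subtype.val hab
    exact Subtype.ext (Subtype.ext h')
  exact h1.comp e he

/-- Every permutation of an `m`-simplex (`2 ≤ m ≤ n`) in `P(V)` extends
to an element of `PGL(V)`. -/
theorem stmt6 {K V : Type*} [Field K] [AddCommGroup V] [Module K V]
    [FiniteDimensional K V] (hdim : 2 ≤ Module.finrank K V)
    {m : ℕ} (hm : 2 ≤ m) (hmn : m ≤ Module.finrank K V)
    (𝒳 : Set (Submodule K V)) (hsimp : IsSimplex K m 𝒳) (s : Equiv.Perm 𝒳) :
    ∃ u : V ≃ₗ[K] V, ∀ P : 𝒳,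
      Submodule.map (u : V →ₗ[K] V) (P : Submodule K V) = (s P : Submodule K V) := by
  classical
  obtain ⟨hfin, hcard, hrank, hnotind, hsub⟩ := hsimp
  haveI : Fintype 𝒳 := hfin.fintype
  -- choose nonzero representatives v
  have hrep : ∀ P : 𝒳, ∃ v : V, v ∈ (P : Submodule K V) ∧ v ≠ 0 := by
    intro P
    have : Module.finrank K (P : Submodule K V) = 1 := hrank P P.2
    have hne : (P : Submodule K V) ≠ ⊥ := by
      intro hbot
      rw [hbot] at this
      simp [finrank_bot] at this
    obtain ⟨v, hv, hv0⟩ := Submodule.exists_mem_ne_zero_of_ne_bot hne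
    exact ⟨v, hv, hv0⟩
  choose v hv hv0 using hrep
  -- v is linearly dependent
  have hdep : ¬ LinearIndependent K v := by
    intro h
    exact hnotind ⟨v, fun P => ⟨hv P, hv0 P⟩, h⟩
  obtain ⟨g, hgsum, i₀, hgi₀⟩ := Fintype.not_linearIndependent_iff.1 hdep
  -- all coefficients are nonzero
  have hgne : ∀ P : 𝒳, g P ≠ 0 := by
    intro P0 hP0
    have hli := simplex_drop_indep hfin hcard hrank hsub v (fun P => ⟨hv P, hv0 P⟩) P0
    have hsum' : ∑ P : {P : 𝒳 // P ≠ P0}, g P.1 • v P.1 = 0 := by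
      have hsplit : ∑ P : 𝒳, g P • v P
          = g P0 • v P0 + ∑ P ∈ Finset.univ.erase P0, g P • v P :=
        (Finset.add_sum_erase _ _ (Finset.mem_univ P0)).symm
      have hsub2 : ∑ P ∈ Finset.univ.erase P0, g P • v P
          = ∑ P : {P : 𝒳 // P ≠ P0}, g P.1 • v P.1 := by
        refine Finset.sum_subtype _ (fun x => ?_) _
        simp
      rw [hsub2, hP0, zero_smul, zero_add] at hsplit
      rw [← hsplit, hgsum]
    have hzero := linearIndependent_iff'.1 hli Finset.univ
      (fun P => g P.1) (by simpa using hsum')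
    by_cases hi : i₀ = P0
    · exact hgi₀ (hi ▸ hP0)
    · exact hgi₀ (hzero ⟨i₀, hi⟩ (Finset.mem_univ _))
  -- rescale: x P := g P • v P, then ∑ x = 0
  set x : 𝒳 → V := fun P => g P • v P with hx
  have hxmem : ∀ P : 𝒳, x P ∈ (P : Submodule K V) :=
    fun P => Submodule.smul_mem _ _ (hv P)
  have hxne : ∀ P : 𝒳, x P ≠ 0 := fun P => smul_ne_zero (hgne P) (hv0 P)
  have hxsum : ∑ P : 𝒳, x P = 0 := hgsum
  have hxrep : ∀ P : 𝒳, x P ∈ (P : Submodule K V) ∧ x P ≠ 0 :=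
    fun P => ⟨hxmem P, hxne P⟩
  -- pick a base point P0
  have hXne : 𝒳.Nonempty := Set.nonempty_of_ncard_ne_zero (by omega)
  obtain ⟨P0v, hP0v⟩ := hXne
  set P0 : 𝒳 := ⟨P0v, hP0v⟩ with hP0def
  set ι := {P : 𝒳 // P ≠ P0} with hι
  -- the two independent families
  have hb1 : LinearIndependent K (fun P : ι => x P.1) :=
    simplex_drop_indep hfin hcard hrank hsub x hxrep P0
  have hb2' : LinearIndependent K (fun Q : {Q : 𝒳 // Q ≠ s P0} => x Q.1) :=
    simplex_drop_indep hfin hcard hrank hsub x hxrep (s P0)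
  let es : ι ≃ {Q : 𝒳 // Q ≠ s P0} :=
    Equiv.subtypeEquiv s (fun P => not_congr (Equiv.apply_eq_iff_eq s).symm)
  have hb2 : LinearIndependent K (fun P : ι => x (s P.1)) :=
    hb2'.comp es es.injective
  -- spans
  set W1 := Submodule.span K (Set.range fun P : ι => x P.1) with hW1
  set W2 := Submodule.span K (Set.range fun P : ι => x (s P.1)) with hW2
  let B1 : Module.Basis ι K W1 := Module.Basis.span hb1
  let B2 : Module.Basis ι K W2 := Module.Basis.span hb2
  let gE : W1 ≃ₗ[K] W2 := B1.equiv B2 (Equiv.refl ι)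
  obtain ⟨C1, hC1⟩ := Submodule.exists_isCompl W1
  obtain ⟨C2, hC2⟩ := Submodule.exists_isCompl W2
  have hfr1 : Module.finrank K W1 = Fintype.card ι := finrank_span_eq_card hb1
  have hfr2 : Module.finrank K W2 = Fintype.card ι := finrank_span_eq_card hb2
  have hcompl1 := Submodule.finrank_add_eq_of_isCompl hC1
  have hcompl2 := Submodule.finrank_add_eq_of_isCompl hC2
  have hfrC : Module.finrank K C1 = Module.finrank K C2 := by omega
  let hE : C1 ≃ₗ[K] C2 := LinearEquiv.ofFinrankEq _ _ hfrC
  let u : V ≃ₗ[K] V :=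
    (Submodule.prodEquivOfIsCompl W1 C1 hC1).symm ≪≫ₗ
      ((gE.prodCongr hE) ≪≫ₗ Submodule.prodEquivOfIsCompl W2 C2 hC2)
  -- u acts as gE on W1
  have hu : ∀ w : W1, u (w : V) = (gE w : V) := by
    intro w
    show (Submodule.prodEquivOfIsCompl W2 C2 hC2)
      ((gE.prodCongr hE) ((Submodule.prodEquivOfIsCompl W1 C1 hC1).symm (w : V))) = _
    rw [Submodule.prodEquivOfIsCompl_symm_apply_left]
    simp
  -- u maps x P to x (s P) for P ≠ P0
  have hux : ∀ P : ι, u (x P.1) = x (s P.1) := by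
    intro P
    have hcoe1 : ((B1 P : W1) : V) = x P.1 := congrArg Subtype.val (Module.Basis.span_apply hb1 P)
    have h4 : u (x P.1) = ((gE (B1 P) : W2) : V) := by
      rw [← hcoe1]; exact hu (B1 P)
    rw [h4]
    have h5 : gE (B1 P) = B2 P := by
      show (B1.equiv B2 (Equiv.refl ι)) (B1 P) = B2 P
      rw [Module.Basis.equiv_apply, Equiv.refl_apply]
    rw [h5]
    exact congrArg Subtype.val (Module.Basis.span_apply hb2 P)
  -- the relation at P0 and at s P0
  have hrel : ∀ Q0 : 𝒳, x Q0 = - ∑ P : {P : 𝒳 // P ≠ Q0}, x P.1 := by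
    intro Q0
    have hsplit : ∑ P : 𝒳, x P
        = x Q0 + ∑ P ∈ Finset.univ.erase Q0, x P :=
      (Finset.add_sum_erase _ _ (Finset.mem_univ Q0)).symm
    have hsub2 : ∑ P ∈ Finset.univ.erase Q0, x P
        = ∑ P : {P : 𝒳 // P ≠ Q0}, x P.1 := by
      refine Finset.sum_subtype _ (fun y => ?_) _
      simp
    rw [hsub2, hxsum] at hsplit
    exact eq_neg_of_add_eq_zero_left hsplit.symm
  -- u maps x P0 to x (s P0)
  have hux0 : u (x P0) = x (s P0) := by
    have h1 : x P0 = - ∑ P : ι, x P.1 := hrel P0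
    have h2 : x (s P0) = - ∑ Q : {Q : 𝒳 // Q ≠ s P0}, x Q.1 := hrel (s P0)
    have h3 : ∑ P : ι, x (s P.1) = ∑ Q : {Q : 𝒳 // Q ≠ s P0}, x Q.1 :=
      Equiv.sum_comp es (fun Q => x Q.1)
    rw [h1, map_neg, map_sum]
    simp only [hux]
    rw [h3, ← h2]
  have huxall : ∀ P : 𝒳, u (x P) = x (s P) := by
    intro P
    by_cases hP : P = P0
    · subst hP; exact hux0
    · exact hux ⟨P, hP⟩
  refine ⟨u, fun P => ?_⟩
  have hPspan : (P : Submodule K V) = Submodule.span K {x P} :=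
    line_eq_span (hrank P P.2) (hxmem P) (hxne P)
  have hsPspan : ((s P : 𝒳) : Submodule K V) = Submodule.span K {x (s P)} :=
    line_eq_span (hrank (s P) (s P).2) (hxmem (s P)) (hxne (s P))
  rw [hPspan, hsPspan, Submodule.map_span]
  congr 1
  rw [Set.image_singleton]
  congr 1
  exact huxall P
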